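/- For every real number x with 1 ≤ x ≤ 2, one has Γ(1+x)^{2/x} ≤ (4/23)(x+1)(x+2), where Γ denotes the Euler Gamma function. -/
import Mathlib

open Real

private lemma exp_ub' {t q : ℝ} (ht0 : 0 ≤ t) (ht1 : t ≤ 1)
    (h : (∑ m ∈ Finset.range 10, t ^ m / m.factorial) +
      t ^ 10 * (10 + 1) / (Nat.factorial 10 * 10) ≤ q) : Real.exp t ≤ q :=
  (Real.exp_bound' ht0 ht1 (by norm_num)).trans h

private lemma log_ub {q L : ℝ} (hq : 0 < q)
    (h : q ≤ (∑ m ∈ Finset.range 10, L ^ m / m.factorial)) (hL : 0 ≤ L) :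
    Real.log q ≤ L := by
  rw [Real.log_le_iff_le_exp hq]
  exact h.trans (Real.sum_le_exp_of_nonneg hL 10)

private lemma log_lb {q L : ℝ} (hq : 0 < q) (hL0 : 0 ≤ L) (hL1 : L ≤ 1)
    (h : (∑ m ∈ Finset.range 10, L ^ m / m.factorial) +
      L ^ 10 * (10 + 1) / (Nat.factorial 10 * 10) ≤ q) : L ≤ Real.log q := by
  rw [Real.le_log_iff_exp_le hq]
  exact exp_ub' hL0 hL1 h

private lemma hl2l : (0.6931471 : ℝ) ≤ Real.log 2 :=
  log_lb (by norm_num) (by norm_num) (by norm_num)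
    (by norm_num [Finset.sum_range_succ, Nat.factorial])

private lemma hl2u : Real.log 2 ≤ 0.6931472 :=
  log_ub (by norm_num) (by norm_num [Finset.sum_range_succ, Nat.factorial]) (by norm_num)

private lemma hl32 : (0.4054651 : ℝ) ≤ Real.log (3/2) :=
  log_lb (by norm_num) (by norm_num) (by norm_num)
    (by norm_num [Finset.sum_range_succ, Nat.factorial])

private lemma hl54 : (0.2231435 : ℝ) ≤ Real.log (5/4) :=
  log_lb (by norm_num) (by norm_num) (by norm_num)
    (by norm_num [Finset.sum_range_succ, Nat.factorial])

private lemma hl74 : (0.5596157 : ℝ) ≤ Real.log (7/4) :=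
  log_lb (by norm_num) (by norm_num) (by norm_num)
    (by norm_num [Finset.sum_range_succ, Nat.factorial])

private lemma hl2316 : Real.log (23/16) ≤ 0.3629056 :=
  log_ub (by norm_num) (by norm_num [Finset.sum_range_succ, Nat.factorial]) (by norm_num)

private lemma gammaR2 : Real.Gamma 2 = 1 := by
  rw [show (2:ℝ) = 1 + 1 by norm_num, Real.Gamma_add_one one_ne_zero, Real.Gamma_one]
  ring

private lemma gammaR3 : Real.Gamma 3 = 2 := by
  rw [show (3:ℝ) = 2 + 1 by norm_num, Real.Gamma_add_one two_ne_zero, gammaR2]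
  ring

private lemma gamma52 : Real.Gamma (5/2) = 3 * Real.sqrt π / 4 := by
  have h1 : Real.Gamma (3/2 + 1) = (3/2) * Real.Gamma (3/2) :=
    Real.Gamma_add_one (by norm_num)
  have h2 : Real.Gamma (1/2 + 1) = (1/2) * Real.Gamma (1/2) :=
    Real.Gamma_add_one (by norm_num)
  rw [show (5:ℝ)/2 = 3/2 + 1 by norm_num, h1, show (3:ℝ)/2 = 1/2 + 1 by norm_num, h2,
    Real.Gamma_one_half_eq]
  ring

private lemma log_gamma52 : Real.log (Real.Gamma (5/2)) ≤ 0.2848 := by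
  have hs : Real.sqrt π ≤ 1.7724541 :=
    Real.sqrt_le_iff.mpr ⟨by norm_num, by nlinarith [Real.pi_lt_d6]⟩
  have hps : (0:ℝ) < Real.sqrt π := Real.sqrt_pos.mpr Real.pi_pos
  have hpos : (0:ℝ) < 3 * Real.sqrt π / 4 := by linarith
  rw [gamma52]
  refine log_ub hpos ?_ (by norm_num)
  have h1 : (3 * Real.sqrt π / 4 : ℝ) ≤ 1.3293406 := by linarith
  refine h1.trans ?_
  norm_num [Finset.sum_range_succ, Nat.factorial]

private lemma poly1 {x : ℝ} (h1 : 1 ≤ x) (h2 : x ≤ 3/2) :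
    2*((2*x-2) * 0.2848) ≤
    (-1.7492 + ((3-2*x)*0.6931471 + (2*x-2)*0.9162906)
        + ((3-2*x)*1.0986122 + (2*x-2)*1.2527628)) * x := by
  nlinarith [sq_nonneg (x - 1.2266)]

private lemma poly2 {x : ℝ} (h1 : 3/2 ≤ x) (h2 : x ≤ 2) :
    2*((4-2*x) * 0.2848 + (2*x-3) * 0.6931472) ≤
    (-1.7492 + ((4-2*x)*0.9162906 + (2*x-3)*1.0986122)
        + ((4-2*x)*1.2527628 + (2*x-3)*1.3862942)) * x := by
  nlinarith [sq_nonneg (x - 1.7105)]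

/-- For every real number `1 ≤ x ≤ 2`, `Γ(1+x)^(2/x) ≤ (4/23)(x+1)(x+2)`. -/
theorem gamma_upper_bound_two (x : ℝ) (hx1 : 1 ≤ x) (hx2 : x ≤ 2) :
    Real.Gamma (1 + x) ^ (2 / x) ≤ (4 / 23) * (x + 1) * (x + 2) := by
  have hx0 : (0:ℝ) < x := by linarith
  have hΓpos : 0 < Real.Gamma (1 + x) := Real.Gamma_pos_of_pos (by linarith)
  have hRpos : (0:ℝ) < 4 / 23 * (x + 1) * (x + 2) := by nlinarith
  rw [Real.rpow_def_of_pos hΓpos, ← Real.exp_log hRpos, Real.exp_le_exp,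
    show Real.log (Real.Gamma (1+x)) * (2/x) = 2 * Real.log (Real.Gamma (1+x)) / x by ring,
    div_le_iff₀ hx0]
  have hlogR : Real.log (4 / 23 * (x + 1) * (x + 2)) =
      Real.log (4/23) + Real.log (x + 1) + Real.log (x + 2) := by
    rw [Real.log_mul (by positivity) (by positivity), Real.log_mul (by norm_num) (by positivity)]
  have hfrac : Real.log ((4:ℝ)/23) = -(Real.log 2 + Real.log 2 + Real.log (23/16)) := by
    rw [show (4:ℝ)/23 = (2*(2*(23/16)))⁻¹ by norm_num, Real.log_inv,
      Real.log_mul (by norm_num) (by norm_num), Real.log_mul (by norm_num) (by norm_num)]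
    ring
  have hfrac' : (-1.7492 : ℝ) ≤ Real.log ((4:ℝ)/23) := by
    rw [hfrac]; linarith [hl2u, hl2316]
  rw [hlogR]
  have hlog52 : Real.log ((5:ℝ)/2) = Real.log 2 + Real.log (5/4) := by
    rw [← Real.log_mul (by norm_num) (by norm_num)]; norm_num
  have hlog3 : Real.log (3:ℝ) = Real.log 2 + Real.log (3/2) := by
    rw [← Real.log_mul (by norm_num) (by norm_num)]; norm_num
  have hlog72 : Real.log ((7:ℝ)/2) = Real.log 2 + Real.log (7/4) := by
    rw [← Real.log_mul (by norm_num) (by norm_num)]; norm_num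
  have hlog4 : Real.log (4:ℝ) = Real.log 2 + Real.log 2 := by
    rw [← Real.log_mul (by norm_num) (by norm_num)]; norm_num
  have hconc := strictConcaveOn_log_Ioi.concaveOn.2
  have hconv := Real.convexOn_log_Gamma.2
  rcases le_total x (3/2) with hc | hc
  · -- 1 ≤ x ≤ 3/2
    have w1 : (0:ℝ) ≤ 3 - 2*x := by linarith
    have w2 : (0:ℝ) ≤ 2*x - 2 := by linarith
    have hsw : (3 - 2*x) + (2*x - 2) = 1 := by ring
    -- log Gamma chord on [2, 5/2]
    have hG := hconv (show (2:ℝ) ∈ Set.Ioi 0 by norm_num)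
      (show (5/2:ℝ) ∈ Set.Ioi 0 by norm_num) w1 w2 hsw
    simp only [smul_eq_mul, Function.comp_apply] at hG
    rw [show (3-2*x)*2 + (2*x-2)*(5/2) = 1 + x by ring, gammaR2, Real.log_one] at hG
    -- log chords
    have hA := hconc (show (2:ℝ) ∈ Set.Ioi 0 by norm_num)
      (show (5/2:ℝ) ∈ Set.Ioi 0 by norm_num) w1 w2 hsw
    rw [show (3-2*x)•(2:ℝ) + (2*x-2)•((5:ℝ)/2) = x + 1 by simp; ring] at hA
    simp only [smul_eq_mul] at hA
    have hB := hconc (show (3:ℝ) ∈ Set.Ioi 0 by norm_num)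
      (show (7/2:ℝ) ∈ Set.Ioi 0 by norm_num) w1 w2 hsw
    rw [show (3-2*x)•(3:ℝ) + (2*x-2)•((7:ℝ)/2) = x + 2 by simp; ring] at hB
    simp only [smul_eq_mul] at hB
    rw [hlog52] at hA
    rw [hlog3, hlog72] at hB
    -- numeric versions
    have hA' : (3-2*x)*0.6931471 + (2*x-2)*0.9162906 ≤ Real.log (x+1) := by
      linarith [mul_le_mul_of_nonneg_left hl2l w1,
        mul_le_mul_of_nonneg_left (add_le_add hl2l hl54) w2]
    have hB' : (3-2*x)*1.0986122 + (2*x-2)*1.2527628 ≤ Real.log (x+2) := by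
      linarith [mul_le_mul_of_nonneg_left (add_le_add hl2l hl32) w1,
        mul_le_mul_of_nonneg_left (add_le_add hl2l hl74) w2]
    have hG' : Real.log (Real.Gamma (1+x)) ≤ (2*x-2) * 0.2848 := by
      linarith [mul_le_mul_of_nonneg_left log_gamma52 w2]
    have hsum : (-1.7492 + ((3-2*x)*0.6931471 + (2*x-2)*0.9162906)
        + ((3-2*x)*1.0986122 + (2*x-2)*1.2527628)) * x ≤
        (Real.log (4/23) + Real.log (x+1) + Real.log (x+2)) * x :=
      mul_le_mul_of_nonneg_right (by linarith) hx0.le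
    refine le_trans ?_ hsum
    linarith [poly1 hx1 hc]
  · -- 3/2 ≤ x ≤ 2
    have w1 : (0:ℝ) ≤ 4 - 2*x := by linarith
    have w2 : (0:ℝ) ≤ 2*x - 3 := by linarith
    have hsw : (4 - 2*x) + (2*x - 3) = 1 := by ring
    have hG := hconv (show (5/2:ℝ) ∈ Set.Ioi 0 by norm_num)
      (show (3:ℝ) ∈ Set.Ioi 0 by norm_num) w1 w2 hsw
    simp only [smul_eq_mul, Function.comp_apply] at hG
    rw [show (4-2*x)*(5/2) + (2*x-3)*3 = 1 + x by ring, gammaR3] at hG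
    have hA := hconc (show (5/2:ℝ) ∈ Set.Ioi 0 by norm_num)
      (show (3:ℝ) ∈ Set.Ioi 0 by norm_num) w1 w2 hsw
    rw [show (4-2*x)•((5:ℝ)/2) + (2*x-3)•(3:ℝ) = x + 1 by simp; ring] at hA
    simp only [smul_eq_mul] at hA
    have hB := hconc (show (7/2:ℝ) ∈ Set.Ioi 0 by norm_num)
      (show (4:ℝ) ∈ Set.Ioi 0 by norm_num) w1 w2 hsw
    rw [show (4-2*x)•((7:ℝ)/2) + (2*x-3)•(4:ℝ) = x + 2 by simp; ring] at hB
    simp only [smul_eq_mul] at hB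
    rw [hlog52] at hA
    rw [hlog3] at hA
    rw [hlog72, hlog4] at hB
    have hA' : (4-2*x)*0.9162906 + (2*x-3)*1.0986122 ≤ Real.log (x+1) := by
      linarith [mul_le_mul_of_nonneg_left (add_le_add hl2l hl54) w1,
        mul_le_mul_of_nonneg_left (add_le_add hl2l hl32) w2]
    have hB' : (4-2*x)*1.2527628 + (2*x-3)*1.3862942 ≤ Real.log (x+2) := by
      linarith [mul_le_mul_of_nonneg_left (add_le_add hl2l hl74) w1,
        mul_le_mul_of_nonneg_left (add_le_add hl2l hl2l) w2]
    have hG' : Real.log (Real.Gamma (1+x)) ≤ (4-2*x) * 0.2848 + (2*x-3) * 0.6931472 := by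
      linarith [mul_le_mul_of_nonneg_left log_gamma52 w1,
        mul_le_mul_of_nonneg_left hl2u w2]
    have hsum : (-1.7492 + ((4-2*x)*0.9162906 + (2*x-3)*1.0986122)
        + ((4-2*x)*1.2527628 + (2*x-3)*1.3862942)) * x ≤
        (Real.log (4/23) + Real.log (x+1) + Real.log (x+2)) * x :=
      mul_le_mul_of_nonneg_right (by linarith) hx0.le
    refine le_trans ?_ hsum
    linarith [poly2 hc hx2]
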